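/- Let k be a field of characteristic 0, let m be a natural number, and let ε be an assignment of a sign ε_{ij} ∈ {1, −1} to each pair of indices 1 ≤ i < j ≤ m. Then the quotient of the free k-algebra on m generators t₁, …, t_m by the two-sided ideal generated by the elements t_it_j + ε_{ij} t_jt_i for all 1 ≤ i < j ≤ m and t_i² − 1 for all 1 ≤ i ≤ m has dimension 2^m as a k-vector space. -/

import Mathlib

open FreeAlgebra

/-- The quotient of the free `k`-algebra on `Fin m` by the two-sided ideal
generated by the set `rels` of relators, realized as the `RingQuot` of the
relation identifying each relator with `0`. -/
abbrev presentedAlgebra (k : Type) [Field k] (m : ℕ)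
    (rels : Set (FreeAlgebra k (Fin m))) : Type :=
  RingQuot (fun a b : FreeAlgebra k (Fin m) => a ∈ rels ∧ b = 0)

namespace Stmt8Aux

variable {k : Type} [Field k] {m : ℕ}

/-- flip generator in (Fin m → ZMod 2) -/
def dl (i : Fin m) : Fin m → ZMod 2 := Pi.single i 1

lemma zmod2 : ∀ a : ZMod 2, a = 0 ∨ a = 1 := by decide

lemma dl_add_dl (i : Fin m) : dl i + dl i = 0 := by
  funext x
  simp only [Pi.add_apply, Pi.zero_apply, dl, Pi.single_apply]
  split <;> decide

lemma add_dl_cancel (U : Fin m → ZMod 2) (i : Fin m) : U + dl i + dl i = U := by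
  rw [add_assoc, dl_add_dl, add_zero]

lemma dl_apply_ne {i x : Fin m} (h : x ≠ i) (S : Fin m → ZMod 2) :
    (S + dl i) x = S x := by
  simp [dl, Pi.single_apply, h]

lemma dl_apply_self (i : Fin m) (S : Fin m → ZMod 2) :
    (S + dl i) i = S i + 1 := by simp [dl]

variable (ε : Fin m → Fin m → k)

lemma hsq (hε : ∀ i j : Fin m, i < j → ε i j = 1 ∨ ε i j = -1)
    {i j : Fin m} (h : i < j) : ε i j * ε i j = 1 := by
  rcases hε i j h with h' | h' <;> rw [h'] <;> ring

/-- diagonal sign coefficient -/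
def dd (i : Fin m) (S : Fin m → ZMod 2) : k :=
  ∏ j : Fin m, if j < i ∧ S j = 1 then -ε j i else 1

lemma dd_sq (hε : ∀ i j : Fin m, i < j → ε i j = 1 ∨ ε i j = -1)
    (i : Fin m) (S : Fin m → ZMod 2) : dd ε i S * dd ε i S = 1 := by
  rw [dd, ← Finset.prod_mul_distrib]
  apply Finset.prod_eq_one
  intro j _
  by_cases h : j < i ∧ S j = 1
  · rw [if_pos h]
    have := hsq ε hε h.1
    linear_combination this
  · simp [h]

lemma dd_flip_ge {i j : Fin m} (h : i ≤ j) (S : Fin m → ZMod 2) :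
    dd ε i (S + dl j) = dd ε i S := by
  unfold dd
  apply Finset.prod_congr rfl
  intro x _
  by_cases hx : x < i
  · rw [dl_apply_ne (ne_of_lt (lt_of_lt_of_le hx h)) S]
  · simp [hx]

lemma dd_flip_self (i : Fin m) (S : Fin m → ZMod 2) :
    dd ε i (S + dl i) = dd ε i S := dd_flip_ge ε le_rfl S

lemma dd_flip_lt (hε : ∀ i j : Fin m, i < j → ε i j = 1 ∨ ε i j = -1)
    {i j : Fin m} (h : i < j) (S : Fin m → ZMod 2) :
    dd ε j (S + dl i) = (-ε i j) * dd ε j S := by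
  unfold dd
  rw [Finset.prod_eq_mul_prod_sdiff_singleton_of_mem (Finset.mem_univ i),
    Finset.prod_eq_mul_prod_sdiff_singleton_of_mem (Finset.mem_univ i)
      (fun x => if x < j ∧ S x = 1 then -ε x j else 1)]
  have hrest : (∏ x ∈ Finset.univ \ {i}, if x < j ∧ (S + dl i) x = 1 then -ε x j else 1)
      = ∏ x ∈ Finset.univ \ {i}, if x < j ∧ S x = 1 then -ε x j else 1 := by
    apply Finset.prod_congr rfl
    intro x hx
    rw [Finset.mem_sdiff, Finset.mem_singleton] at hx
    rw [dl_apply_ne hx.2 S]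
  rw [hrest, ← mul_assoc]
  congr 1
  rw [dl_apply_self]
  rcases zmod2 (S i) with h0 | h1
  · rw [h0]; norm_num [h]
  · rw [h1]
    have : (1 : ZMod 2) + 1 = 0 := by decide
    rw [this]
    norm_num [h]
    exact (hsq ε hε h).symm


/-- the flip-with-sign operator -/
def L (i : Fin m) : ((Fin m → ZMod 2) → k) →ₗ[k] ((Fin m → ZMod 2) → k) where
  toFun f := fun S => dd ε i S * f (S + dl i)
  map_add' f g := by funext S; simp [mul_add]
  map_smul' c f := by funext S; simp [smul_eq_mul]; ring

lemma L_apply (i : Fin m) (f : (Fin m → ZMod 2) → k) (S : Fin m → ZMod 2) :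
    L ε i f S = dd ε i S * f (S + dl i) := rfl

lemma L_sq (hε : ∀ i j : Fin m, i < j → ε i j = 1 ∨ ε i j = -1) (i : Fin m) :
    (L ε i : Module.End k ((Fin m → ZMod 2) → k)) * L ε i = 1 := by
  apply LinearMap.ext
  intro f
  funext S
  rw [Module.End.mul_apply, L_apply, L_apply, dd_flip_self, add_dl_cancel,
    ← mul_assoc, dd_sq ε hε, one_mul, Module.End.one_apply]

lemma L_rel (hε : ∀ i j : Fin m, i < j → ε i j = 1 ∨ ε i j = -1)
    {i j : Fin m} (h : i < j) :
    (L ε i : Module.End k ((Fin m → ZMod 2) → k)) * L ε j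
      + ε i j • ((L ε j : Module.End k ((Fin m → ZMod 2) → k)) * L ε i) = 0 := by
  apply LinearMap.ext
  intro f
  funext S
  have hij : i ≠ j := ne_of_lt h
  have hcomm : S + dl i + dl j = S + dl j + dl i := by
    rw [add_assoc, add_assoc, add_comm (dl i)]
  simp only [LinearMap.add_apply, LinearMap.smul_apply, Module.End.mul_apply,
    L_apply, LinearMap.zero_apply, Pi.add_apply, Pi.smul_apply, Pi.zero_apply,
    smul_eq_mul]
  rw [dd_flip_lt ε hε h, dd_flip_ge ε (le_of_lt h), hcomm]
  ring

/-- the relator set, verbatim from the statement -/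
abbrev rels (k : Type) [Field k] {m : ℕ} (ε : Fin m → Fin m → k) :
    Set (FreeAlgebra k (Fin m)) :=
  {r | (∃ i j : Fin m, i < j ∧ r = ι k i * ι k j + ε i j • (ι k j * ι k i)) ∨
       (∃ i : Fin m, r = ι k i * ι k i - 1)}

abbrev relR (k : Type) [Field k] {m : ℕ} (ε : Fin m → Fin m → k) :
    FreeAlgebra k (Fin m) → FreeAlgebra k (Fin m) → Prop :=
  fun a b => a ∈ rels k ε ∧ b = 0

/-- representation of the free algebra -/
noncomputable def FF : FreeAlgebra k (Fin m) →ₐ[k] Module.End k ((Fin m → ZMod 2) → k) :=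
  FreeAlgebra.lift k (L ε)

lemma FF_vanish (hε : ∀ i j : Fin m, i < j → ε i j = 1 ∨ ε i j = -1) :
    ∀ ⦃x y : FreeAlgebra k (Fin m)⦄, relR k ε x y → FF ε x = FF ε y := by
  rintro x y ⟨hx, rfl⟩
  rw [map_zero]
  rcases hx with ⟨i, j, h, rfl⟩ | ⟨i, rfl⟩
  · rw [map_add, map_mul, map_smul, map_mul]
    show FF ε (ι k i) * FF ε (ι k j) + ε i j • (FF ε (ι k j) * FF ε (ι k i)) = 0
    rw [show FF ε (ι k i) = L ε i from FreeAlgebra.lift_ι_apply _ _,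
      show FF ε (ι k j) = L ε j from FreeAlgebra.lift_ι_apply _ _]
    exact L_rel ε hε h
  · rw [map_sub, map_mul, map_one]
    rw [show FF ε (ι k i) = L ε i from FreeAlgebra.lift_ι_apply _ _]
    rw [L_sq ε hε, sub_self]

/-- representation of the quotient -/
noncomputable def rho (hε : ∀ i j : Fin m, i < j → ε i j = 1 ∨ ε i j = -1) :
    RingQuot (relR k ε) →ₐ[k] Module.End k ((Fin m → ZMod 2) → k) :=
  RingQuot.liftAlgHom k ⟨FF ε, FF_vanish ε hε⟩

/-- images of the generators in the quotient -/
noncomputable def gg (i : Fin m) : RingQuot (relR k ε) :=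
  RingQuot.mkAlgHom k (relR k ε) (ι k i)

lemma rho_gg (hε : ∀ i j : Fin m, i < j → ε i j = 1 ∨ ε i j = -1) (i : Fin m) :
    rho ε hε (gg ε i) = L ε i := by
  rw [gg, rho, RingQuot.liftAlgHom_mkAlgHom_apply]
  exact FreeAlgebra.lift_ι_apply _ _

lemma gg_sq (i : Fin m) : gg ε i * gg ε i = 1 := by
  have h0 : RingQuot.mkAlgHom k (relR k ε) (ι k i * ι k i - 1)
      = RingQuot.mkAlgHom k (relR k ε) 0 :=
    RingQuot.mkAlgHom_rel k ⟨Or.inr ⟨i, rfl⟩, rfl⟩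
  rw [map_sub, map_mul, map_one, map_zero, sub_eq_zero] at h0
  exact h0

lemma gg_swap (hε : ∀ i j : Fin m, i < j → ε i j = 1 ∨ ε i j = -1)
    {i j : Fin m} (h : j < i) :
    gg ε i * gg ε j = (-ε j i) • (gg ε j * gg ε i) := by
  have h0 : RingQuot.mkAlgHom k (relR k ε) (ι k j * ι k i + ε j i • (ι k i * ι k j))
      = RingQuot.mkAlgHom k (relR k ε) 0 :=
    RingQuot.mkAlgHom_rel k ⟨Or.inl ⟨j, i, h, rfl⟩, rfl⟩
  rw [map_add, map_mul, map_smul, map_mul, map_zero, add_eq_zero_iff_eq_neg] at h0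
  show gg ε i * gg ε j = _
  unfold gg
  rw [h0, smul_neg, neg_smul, neg_neg, smul_smul, hsq ε hε h, one_smul]


open Pointwise

/-- ordered word corresponding to a subset -/
noncomputable def ww (S : Fin m → ZMod 2) : RingQuot (relR k ε) :=
  ((List.finRange m).map (fun j => if S j = 1 then gg ε j else 1)).prod

lemma push (hε : ∀ i j : Fin m, i < j → ε i j = 1 ∨ ε i j = -1) (i : Fin m) :
    ∀ (l : List (Fin m)), l.Pairwise (· < ·) → i ∈ l → ∀ S : Fin m → ZMod 2,
    ∃ c : k, c * c = 1 ∧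
      gg ε i * ((l.map fun j => if S j = 1 then gg ε j else 1)).prod
        = c • ((l.map fun j => if (S + dl i) j = 1 then gg ε j else 1)).prod := by
  intro l
  induction l with
  | nil => intro _ hi; exact absurd hi (List.not_mem_nil (a := i))
  | cons j t ih =>
    intro hp hi S
    obtain ⟨hjt, hpt⟩ := List.pairwise_cons.mp hp
    simp only [List.map_cons, List.prod_cons]
    rcases eq_or_ne i j with rfl | hij
    · have hmap : (t.map fun x => if (S + dl i) x = 1 then gg ε x else 1)
          = t.map fun x => if S x = 1 then gg ε x else 1 := by
        apply List.map_congr_left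
        intro x hx
        rw [dl_apply_ne (ne_of_gt (hjt x hx)) S]
      rw [hmap]
      rcases zmod2 (S i) with h0 | h1
      · refine ⟨1, by ring, ?_⟩
        rw [h0, dl_apply_self, h0, zero_add]
        have : ¬ ((0 : ZMod 2) = 1) := by decide
        rw [if_neg this, if_pos rfl, one_mul, one_smul]
      · refine ⟨1, by ring, ?_⟩
        rw [h1, dl_apply_self, h1]
        have h2 : (1 : ZMod 2) + 1 = 0 := by decide
        have h3 : ¬ ((0 : ZMod 2) = 1) := by decide
        rw [h2, if_pos rfl, if_neg h3, one_mul, one_smul, ← mul_assoc, gg_sq, one_mul]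
    · have hit : i ∈ t := (List.mem_cons.mp hi).resolve_left hij
      have hji : j < i := hjt i hit
      obtain ⟨c, hc, hcc⟩ := ih hpt hit S
      have hj' : (S + dl i) j = S j := dl_apply_ne (Ne.symm hij) S
      rcases zmod2 (S j) with h0 | h1
      · have h3 : ¬ ((S j : ZMod 2) = 1) := by rw [h0]; decide
        rw [hj', if_neg h3, one_mul, one_mul]
        exact ⟨c, hc, hcc⟩
      · rw [hj', if_pos h1]
        refine ⟨(-ε j i) * c, ?_, ?_⟩
        · have := hsq ε hε hji
          linear_combination (ε j i * ε j i) * hc + this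
        · rw [← mul_assoc, gg_swap ε hε hji, smul_mul_assoc, mul_assoc, hcc,
            mul_smul_comm, smul_smul]

lemma push' (hε : ∀ i j : Fin m, i < j → ε i j = 1 ∨ ε i j = -1) (i : Fin m)
    (S : Fin m → ZMod 2) :
    ∃ c : k, c * c = 1 ∧ gg ε i * ww ε S = c • ww ε (S + dl i) :=
  push ε hε i (List.finRange m) (List.pairwise_lt_finRange m) (List.mem_finRange i) S

/-- the element of (Fin m → ZMod 2) accumulated by a list of generators -/
def eGen (S : Fin m → ZMod 2) (l : List (Fin m)) : Fin m → ZMod 2 :=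
  (l.map fun j => if S j = 1 then dl j else 0).sum

lemma eGen_finRange (S : Fin m → ZMod 2) : eGen S (List.finRange m) = S := by
  rw [eGen, ← Fin.sum_univ_def]
  have : ∀ j : Fin m, (if S j = 1 then dl j else 0) = Pi.single j (S j) := by
    intro j
    rcases zmod2 (S j) with h0 | h1
    · rw [h0, if_neg (by decide : ¬ ((0:ZMod 2) = 1)), Pi.single_zero]
    · rw [h1, if_pos rfl]; rfl
  rw [Finset.sum_congr rfl (fun j _ => this j), Finset.univ_sum_single]

lemma ww_zero : ww ε 0 = 1 := by
  apply List.prod_eq_one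
  intro x hx
  simp only [List.mem_map] at hx
  obtain ⟨j, _, rfl⟩ := hx
  rw [if_neg]
  show ¬ ((0 : ZMod 2) = 1)
  decide

lemma mulW_aux (hε : ∀ i j : Fin m, i < j → ε i j = 1 ∨ ε i j = -1)
    (S : Fin m → ZMod 2) :
    ∀ (l : List (Fin m)) (T : Fin m → ZMod 2),
    ∃ c : k, c * c = 1 ∧
      ((l.map fun j => if S j = 1 then gg ε j else 1)).prod * ww ε T
        = c • ww ε (T + eGen S l) := by
  intro l
  induction l with
  | nil =>
    intro T
    refine ⟨1, by ring, ?_⟩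
    simp [eGen]
  | cons j t ih =>
    intro T
    simp only [List.map_cons, List.prod_cons]
    obtain ⟨c, hc, hcc⟩ := ih T
    rcases zmod2 (S j) with h0 | h1
    · have h3 : ¬ ((S j : ZMod 2) = 1) := by rw [h0]; decide
      have he : eGen S (j :: t) = eGen S t := by
        simp [eGen, if_neg h3]
      rw [if_neg h3, one_mul, he]
      exact ⟨c, hc, hcc⟩
    · obtain ⟨c', hc', hcc'⟩ := push' ε hε j (T + eGen S t)
      have he : T + eGen S (j :: t) = T + eGen S t + dl j := by
        simp only [eGen, List.map_cons, List.sum_cons, if_pos h1]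
        abel
      refine ⟨c * c', ?_, ?_⟩
      · linear_combination c' * c' * hc + hc'
      · rw [if_pos h1, mul_assoc, hcc, mul_smul_comm, hcc', he, smul_smul]

lemma mulW (hε : ∀ i j : Fin m, i < j → ε i j = 1 ∨ ε i j = -1)
    (S T : Fin m → ZMod 2) :
    ∃ c : k, c * c = 1 ∧ ww ε S * ww ε T = c • ww ε (S + T) := by
  obtain ⟨c, hc, hcc⟩ := mulW_aux ε hε S (List.finRange m) T
  refine ⟨c, hc, ?_⟩
  rw [show ww ε S * ww ε T
      = ((List.finRange m).map fun j => if S j = 1 then gg ε j else 1).prod * ww ε T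
      from rfl, hcc, eGen_finRange, add_comm]

lemma span_top (hε : ∀ i j : Fin m, i < j → ε i j = 1 ∨ ε i j = -1) :
    Submodule.span k (Set.range (ww ε)) = ⊤ := by
  rw [eq_top_iff]
  rintro a -
  obtain ⟨x, rfl⟩ := RingQuot.mkAlgHom_surjective k (relR k ε) a
  refine FreeAlgebra.induction k (Fin m)
    (motive := fun x => RingQuot.mkAlgHom k (relR k ε) x
      ∈ Submodule.span k (Set.range (ww ε))) ?_ ?_ ?_ ?_ x
  · intro r
    rw [AlgHom.commutes, Algebra.algebraMap_eq_smul_one, ← ww_zero ε]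
    exact Submodule.smul_mem _ r (Submodule.subset_span (Set.mem_range_self 0))
  · intro i
    obtain ⟨c, hc, hcc⟩ := push' ε hε i 0
    have : RingQuot.mkAlgHom k (relR k ε) (ι k i) = c • ww ε (0 + dl i) := by
      rw [← hcc, ww_zero, mul_one]; rfl
    rw [this]
    exact Submodule.smul_mem _ c (Submodule.subset_span (Set.mem_range_self _))
  · intro a b ha hb
    rw [map_mul]
    have hsub : Set.range (ww ε) * Set.range (ww ε)
        ⊆ (Submodule.span k (Set.range (ww ε)) : Set (RingQuot (relR k ε))) := by
      rintro z ⟨u, ⟨S, rfl⟩, v, ⟨T, rfl⟩, rfl⟩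
      obtain ⟨c, hc, hcc⟩ := mulW ε hε S T
      show ww ε S * ww ε T ∈ _
      rw [hcc]
      exact Submodule.smul_mem _ c (Submodule.subset_span (Set.mem_range_self _))
    have := Submodule.mul_mem_mul ha hb
    rw [Submodule.span_mul_span] at this
    exact Submodule.span_le.mpr hsub this
  · intro a b ha hb
    rw [map_add]
    exact Submodule.add_mem _ ha hb


/-- delta basis vector -/
def bs (U : Fin m → ZMod 2) : (Fin m → ZMod 2) → k := Pi.single U 1

lemma L_single (j : Fin m) (U : Fin m → ZMod 2) :
    L ε j (bs U) = dd ε j (U + dl j) • bs (U + dl j) := by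
  funext S
  simp only [bs]
  rw [L_apply, Pi.smul_apply, smul_eq_mul]
  rcases eq_or_ne S (U + dl j) with rfl | hne
  · rw [add_dl_cancel, Pi.single_eq_same, Pi.single_eq_same]
  · have h2 : S + dl j ≠ U := fun hh => hne (by rw [← hh, add_dl_cancel])
    rw [Pi.single_eq_of_ne h2, Pi.single_eq_of_ne hne, mul_zero, mul_zero]

lemma Lprod_single (hε : ∀ i j : Fin m, i < j → ε i j = 1 ∨ ε i j = -1)
    (S : Fin m → ZMod 2) :
    ∀ (l : List (Fin m)) (T : Fin m → ZMod 2),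
    ∃ c : k, c * c = 1 ∧
      ((l.map fun j => if S j = 1
          then (L ε j : Module.End k ((Fin m → ZMod 2) → k)) else 1)).prod (bs T)
      = c • bs (T + eGen S l) := by
  intro l
  induction l with
  | nil =>
    intro T
    refine ⟨1, by ring, ?_⟩
    simp only [List.map_nil, List.prod_nil, Module.End.one_apply, one_smul]
    rw [show T + eGen S [] = T by simp [eGen]]
  | cons j t ih =>
    intro T
    simp only [List.map_cons, List.prod_cons, Module.End.mul_apply]
    obtain ⟨c, hc, hcc⟩ := ih T
    rcases zmod2 (S j) with h0 | h1
    · have h3 : ¬ ((S j : ZMod 2) = 1) := by rw [h0]; decide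
      have he : eGen S (j :: t) = eGen S t := by simp [eGen, if_neg h3]
      rw [if_neg h3, he, hcc, Module.End.one_apply]
      exact ⟨c, hc, rfl⟩
    · have he : T + eGen S (j :: t) = T + eGen S t + dl j := by
        simp only [eGen, List.map_cons, List.sum_cons, if_pos h1]
        abel
      refine ⟨c * dd ε j (T + eGen S t + dl j), ?_, ?_⟩
      · have := dd_sq ε hε j (T + eGen S t + dl j)
        linear_combination (dd ε j (T + eGen S t + dl j)
          * dd ε j (T + eGen S t + dl j)) * hc + this
      · rw [if_pos h1, hcc, map_smul, L_single, he, smul_smul]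

lemma rho_ww (hε : ∀ i j : Fin m, i < j → ε i j = 1 ∨ ε i j = -1)
    (S : Fin m → ZMod 2) :
    rho ε hε (ww ε S) = ((List.finRange m).map fun j => if S j = 1
      then (L ε j : Module.End k ((Fin m → ZMod 2) → k)) else 1).prod := by
  rw [ww, map_list_prod, List.map_map]
  congr 1
  apply List.map_congr_left
  intro j _
  by_cases hS : S j = 1
  · simp only [Function.comp_apply, if_pos hS, rho_gg ε hε]
  · simp only [Function.comp_apply, if_neg hS, map_one]

lemma rho_ww_single (hε : ∀ i j : Fin m, i < j → ε i j = 1 ∨ ε i j = -1)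
    (S : Fin m → ZMod 2) :
    ∃ c : k, c * c = 1 ∧ rho ε hε (ww ε S) (bs 0) = c • bs S := by
  obtain ⟨c, hc, hcc⟩ := Lprod_single ε hε S (List.finRange m) 0
  refine ⟨c, hc, ?_⟩
  rw [rho_ww ε hε, hcc, eGen_finRange, zero_add]

lemma ww_li (hε : ∀ i j : Fin m, i < j → ε i j = 1 ∨ ε i j = -1) :
    LinearIndependent k (ww ε) := by
  let E : RingQuot (relR k ε) →ₗ[k] ((Fin m → ZMod 2) → k) :=
    { toFun := fun a => rho ε hε a (bs 0)
      map_add' := fun a b => by simp only [map_add, LinearMap.add_apply]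
      map_smul' := fun c a => by
        simp only [map_smul, LinearMap.smul_apply, RingHom.id_apply] }
  apply LinearIndependent.of_comp E
  have key : ∀ S, ∃ c : kˣ, E (ww ε S) = (c : k) • bs S := by
    intro S
    obtain ⟨c, hc, hcc⟩ := rho_ww_single ε hε S
    exact ⟨⟨c, c, hc, hc⟩, hcc⟩
  choose u hu using key
  have heq : (⇑E ∘ ww ε) = u • (fun S : Fin m → ZMod 2 => bs S) := by
    funext S
    rw [Function.comp_apply, hu, Pi.smul_apply']
    rfl
  rw [heq]
  have hb : LinearIndependent k (fun S : Fin m → ZMod 2 => (bs S : (Fin m → ZMod 2) → k)) := by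
    have h1 := (Pi.basisFun k (Fin m → ZMod 2)).linearIndependent
    have h2 : ⇑(Pi.basisFun k (Fin m → ZMod 2))
        = fun S : Fin m → ZMod 2 => (bs S : (Fin m → ZMod 2) → k) := by
      funext S
      rw [Pi.basisFun_apply]
      rfl
    rwa [h2] at h1
  exact hb.units_smul u

lemma finrank_eq (hε : ∀ i j : Fin m, i < j → ε i j = 1 ∨ ε i j = -1) :
    Module.finrank k (RingQuot (relR k ε)) = 2 ^ m := by
  have b : Module.Basis (Fin m → ZMod 2) k (RingQuot (relR k ε)) :=
    Module.Basis.mk (ww_li ε hε) (by rw [span_top ε hε])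
  rw [Module.finrank_eq_card_basis b, Fintype.card_fun, ZMod.card, Fintype.card_fin]

end Stmt8Aux

theorem stmt_8 (k : Type) [Field k] [CharZero k] (m : ℕ)
    (ε : Fin m → Fin m → k) (hε : ∀ i j : Fin m, i < j → ε i j = 1 ∨ ε i j = -1) :
    Module.finrank k (presentedAlgebra k m
      {r | (∃ i j : Fin m, i < j ∧ r = ι k i * ι k j + ε i j • (ι k j * ι k i)) ∨
           (∃ i : Fin m, r = ι k i * ι k i - 1)}) = 2 ^ m :=
  Stmt8Aux.finrank_eq ε hε
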